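/- Consistency of empirical-loss minimizers: for each i, let ℓᵢ : ℝ^{nᵢ} × ℝ^{nᵢ} → ℝ be continuous and nonnegative, with ℓᵢ(a,b)=0 iff a=b, and let the surrogate f̂ᵢ(x₋ᵢ,θᵢ) be continuous in both arguments with the pointwise-matching property: for every (xᵢ,x₋ᵢ) ∈ Ω there exists θ with ℓᵢ(xᵢ, f̂ᵢ(x₋ᵢ,θ)) = 0. Suppose θᵢᵏ globally minimizes θ ↦ (1/k)Σ_{t=1}^{k} ℓᵢ(xᵢᵗ, f̂ᵢ(x̂₋ᵢᵗ,θ)), and xᵢᵏ → x̄ᵢ, x̂₋ᵢᵏ → x̄₋ᵢ with (x̄ᵢ,x̄₋ᵢ) ∈ Ω, and θᵢᵏ → θ̄ᵢ. Then ℓᵢ(x̄ᵢ, f̂ᵢ(x̄₋ᵢ, θ̄ᵢ)) = 0, i.e., f̂ᵢ(x̄₋ᵢ, θ̄ᵢ) = x̄ᵢ. -/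

import Mathlib

/- Statement 16 (Lemma 4, consistency of empirical-loss minimizers), stated for a
single agent `i`.  `A` is the agent's decision space, `B` the space of the others'
decisions, `T` the parameter space.  If the loss is continuous, nonnegative, and zero
exactly on the diagonal, the surrogate is continuous with the pointwise-matching
property on `Ω`, `θᵏ` is a global minimizer of the `k`-sample empirical loss, and all
sequences converge with feasible limit, then the limit surrogate matches exactly:
`f̂(x̄₋ᵢ, θ̄) = x̄ᵢ`. -/
set_option maxHeartbeats 1000000 in
theorem empirical_loss_minimizer_consistency {ni nmi pi : ℕ}
    (Ω : Set (EuclideanSpace ℝ (Fin ni) × EuclideanSpace ℝ (Fin nmi)))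
    (ℓ : EuclideanSpace ℝ (Fin ni) → EuclideanSpace ℝ (Fin ni) → ℝ)
    (hℓcont : Continuous fun q : EuclideanSpace ℝ (Fin ni) × EuclideanSpace ℝ (Fin ni) =>
      ℓ q.1 q.2)
    (hℓnonneg : ∀ u w, 0 ≤ ℓ u w)
    (hℓzero : ∀ u w, ℓ u w = 0 ↔ u = w)
    (fhat : EuclideanSpace ℝ (Fin nmi) → EuclideanSpace ℝ (Fin pi) →
      EuclideanSpace ℝ (Fin ni))
    (hfcont : Continuous fun q : EuclideanSpace ℝ (Fin nmi) × EuclideanSpace ℝ (Fin pi) =>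
      fhat q.1 q.2)
    -- pointwise matching property
    (hmatch : ∀ z ∈ Ω, ∃ θ, ℓ z.1 (fhat z.2 θ) = 0)
    (xi : ℕ → EuclideanSpace ℝ (Fin ni))
    (xhat : ℕ → EuclideanSpace ℝ (Fin nmi))
    (θseq : ℕ → EuclideanSpace ℝ (Fin pi))
    -- θᵏ is a global minimizer of the k-sample empirical loss
    (hglobal : ∀ k : ℕ, 1 ≤ k → ∀ θ,
      (1 / (k : ℝ)) * ∑ t ∈ Finset.Icc 1 k, ℓ (xi t) (fhat (xhat t) (θseq k))
        ≤ (1 / (k : ℝ)) * ∑ t ∈ Finset.Icc 1 k, ℓ (xi t) (fhat (xhat t) θ))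
    (hsamples : ∀ t, (xi t, xhat t) ∈ Ω)
    (xbari : EuclideanSpace ℝ (Fin ni)) (xbarmi : EuclideanSpace ℝ (Fin nmi))
    (θbar : EuclideanSpace ℝ (Fin pi))
    (hxi : Filter.Tendsto xi Filter.atTop (nhds xbari))
    (hxhat : Filter.Tendsto xhat Filter.atTop (nhds xbarmi))
    (hfeas : (xbari, xbarmi) ∈ Ω)
    (hθ : Filter.Tendsto θseq Filter.atTop (nhds θbar)) :
    ℓ xbari (fhat xbarmi θbar) = 0 ∧ fhat xbarmi θbar = xbari := by

  -- the loss at the limit point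
  set c : ℝ := ℓ xbari (fhat xbarmi θbar) with hc_def
  obtain ⟨θs, hθs⟩ := hmatch (xbari, xbarmi) hfeas
  suffices hc : c = 0 by exact ⟨hc, ((hℓzero _ _).1 hc).symm⟩
  by_contra hcne
  have hcpos : 0 < c := lt_of_le_of_ne (hℓnonneg _ _) (Ne.symm hcne)
  -- the empirical loss at the fixed parameter θs tends to 0 (Cesàro)
  have ha : Filter.Tendsto (fun t => ℓ (xi t) (fhat (xhat t) θs)) Filter.atTop (nhds 0) := by
    have hcont : Continuous fun p : EuclideanSpace ℝ (Fin ni) × EuclideanSpace ℝ (Fin nmi) =>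
        ℓ p.1 (fhat p.2 θs) :=
      hℓcont.comp (continuous_fst.prodMk (hfcont.comp (continuous_snd.prodMk continuous_const)))
    have := (hcont.tendsto (xbari, xbarmi)).comp (hxi.prodMk_nhds hxhat)
    simpa [hθs, Function.comp_def] using this
  have hmono : Filter.Tendsto (fun t : ℕ => 1 + t) Filter.atTop Filter.atTop := by
    simpa [add_comm] using Filter.tendsto_add_atTop_nat 1
  have ha' : Filter.Tendsto (fun t => ℓ (xi (1 + t)) (fhat (xhat (1 + t)) θs))
      Filter.atTop (nhds 0) := ha.comp hmono
  have hB : Filter.Tendsto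
      (fun k : ℕ => (1 / (k : ℝ)) * ∑ t ∈ Finset.Icc 1 k, ℓ (xi t) (fhat (xhat t) θs))
      Filter.atTop (nhds 0) := by
    have := ha'.cesaro
    refine this.congr fun k => ?_
    rw [← Finset.Ico_add_one_right_eq_Icc, Finset.sum_Ico_eq_sum_range]
    simp [smul_eq_mul, one_div]
  -- choose an open product neighborhood where the loss exceeds c/2
  have hHcont : Continuous fun q :
      (EuclideanSpace ℝ (Fin ni) × EuclideanSpace ℝ (Fin nmi)) × EuclideanSpace ℝ (Fin pi) =>
      ℓ q.1.1 (fhat q.1.2 q.2) := by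
    exact hℓcont.comp ((continuous_fst.comp continuous_fst).prodMk
      (hfcont.comp ((continuous_snd.comp continuous_fst).prodMk continuous_snd)))
  have hUopen : IsOpen {q :
      (EuclideanSpace ℝ (Fin ni) × EuclideanSpace ℝ (Fin nmi)) × EuclideanSpace ℝ (Fin pi) |
      c / 2 < ℓ q.1.1 (fhat q.1.2 q.2)} := isOpen_lt continuous_const hHcont
  have hUmem : ((xbari, xbarmi), θbar) ∈ {q :
      (EuclideanSpace ℝ (Fin ni) × EuclideanSpace ℝ (Fin nmi)) × EuclideanSpace ℝ (Fin pi) |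
      c / 2 < ℓ q.1.1 (fhat q.1.2 q.2)} := by
    simp only [Set.mem_setOf_eq, ← hc_def]
    linarith
  obtain ⟨V, W, hVopen, hWopen, hVmem, hWmem, hVW⟩ := isOpen_prod_iff.1 hUopen _ _ hUmem
  obtain ⟨N1, hN1⟩ := ((hxi.prodMk_nhds hxhat).eventually
    (hVopen.eventually_mem hVmem)).exists_forall_of_atTop
  obtain ⟨N2, hN2⟩ := (hθ.eventually (hWopen.eventually_mem hWmem)).exists_forall_of_atTop
  set N : ℕ := max N1 N2 + 1 with hN_def
  -- eventually the minimum value is below c/4, pick such a large k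
  have hsmall : ∀ᶠ k : ℕ in Filter.atTop,
      (1 / (k : ℝ)) * ∑ t ∈ Finset.Icc 1 k, ℓ (xi t) (fhat (xhat t) θs) < c / 4 :=
    hB.eventually (Filter.Tendsto.eventually_lt_const (by linarith) Filter.tendsto_id)
  obtain ⟨k, hk1, hk2⟩ := (hsmall.and (Filter.eventually_ge_atTop (2 * N))).exists
  have hk2N : 2 * N ≤ k := hk2
  have hkpos : 1 ≤ k := le_trans (by omega) hk2N
  have hkR : (0:ℝ) < (k : ℝ) := by exact_mod_cast hkpos
  -- each term with index in [N, k] is > c/2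
  have hbig : ∀ t ∈ Finset.Icc N k, c / 2 ≤ ℓ (xi t) (fhat (xhat t) (θseq k)) := by
    intro t ht
    obtain ⟨htN, htk⟩ := Finset.mem_Icc.1 ht
    have h1 : (xi t, xhat t) ∈ V := hN1 t (by omega)
    have h2 : θseq k ∈ W := hN2 k (by omega)
    exact le_of_lt (hVW (Set.mk_mem_prod h1 h2))
  -- lower bound the empirical loss at θseq k
  have hsum_lb : ((k + 1 - N : ℕ) : ℝ) * (c / 2)
      ≤ ∑ t ∈ Finset.Icc 1 k, ℓ (xi t) (fhat (xhat t) (θseq k)) := by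
    have hsub : Finset.Icc N k ⊆ Finset.Icc 1 k := by
      intro t ht; rw [Finset.mem_Icc] at *; omega
    calc ((k + 1 - N : ℕ) : ℝ) * (c / 2)
        = (Finset.Icc N k).card * (c / 2) := by rw [Nat.card_Icc]
      _ = ∑ _t ∈ Finset.Icc N k, (c / 2) := by rw [Finset.sum_const, nsmul_eq_mul]
      _ ≤ ∑ t ∈ Finset.Icc N k, ℓ (xi t) (fhat (xhat t) (θseq k)) :=
          Finset.sum_le_sum hbig
      _ ≤ ∑ t ∈ Finset.Icc 1 k, ℓ (xi t) (fhat (xhat t) (θseq k)) :=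
          Finset.sum_le_sum_of_subset_of_nonneg hsub (fun t _ _ => hℓnonneg _ _)
  have hcard : (k : ℝ) / 2 ≤ ((k + 1 - N : ℕ) : ℝ) := by
    have h1 : N ≤ k := by omega
    have : ((k + 1 - N : ℕ) : ℝ) = (k : ℝ) + 1 - (N : ℝ) := by
      push_cast [Nat.cast_sub (by omega : N ≤ k + 1)]; ring
    rw [this]
    have h2 : (2 : ℝ) * (N : ℝ) ≤ (k : ℝ) := by exact_mod_cast hk2N
    linarith
  have hA_lb : c / 4 ≤ (1 / (k : ℝ)) * ∑ t ∈ Finset.Icc 1 k, ℓ (xi t) (fhat (xhat t) (θseq k)) := by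
    have h1 : (k : ℝ) / 2 * (c / 2) ≤ ∑ t ∈ Finset.Icc 1 k, ℓ (xi t) (fhat (xhat t) (θseq k)) :=
      le_trans (by nlinarith) hsum_lb
    have := mul_le_mul_of_nonneg_left h1 (le_of_lt (one_div_pos.2 hkR))
    have hk0 : (k : ℝ) ≠ 0 := ne_of_gt hkR
    calc c / 4 = (1 / (k : ℝ)) * ((k : ℝ) / 2 * (c / 2)) := by field_simp; ring_nf
      _ ≤ _ := this
  have := hglobal k hkpos θs
  linarith
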